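/- arXiv:1507.06980 — 2 statements merged into one kernel-verified Lean document; each statement's English description precedes it below -/
import Mathlib

section
/- Let (x, y, θ, λθ) : [0,T] → ℝ⁴ be differentiable with ẋ = v cos θ, ẏ = v sin θ, and λ̇θ = v·(a·sin θ − b·cos θ) for constants a, b and v > 0. Then the function t ↦ λθ(t) + b·x(t) − a·y(t) is constant on [0,T]. Consequently, any two times t1, t2 with λθ(t1) = λθ(t2) = 0 satisfy b·x(t1) − a·y(t1) = b·x(t2) − a·y(t2); i.e., all points of the trajectory where λθ vanishes lie on a common straight line b·x − a·y = c (provided (a,b) ≠ (0,0)). -/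
/-- Fact 2: lθ + b·x − a·y is a first integral; hence all points where lθ = 0
lie on the common line b·x − a·y = c. -/
theorem dubins_zeros_of_lambda_theta_collinear
    (T v a b : ℝ) (hT : 0 < T) (hv : 0 < v)
    (x y θ lθ : ℝ → ℝ)
    (hx : ∀ t ∈ Set.Icc (0:ℝ) T, HasDerivAt x (v * Real.cos (θ t)) t)
    (hy : ∀ t ∈ Set.Icc (0:ℝ) T, HasDerivAt y (v * Real.sin (θ t)) t)
    (hlθ : ∀ t ∈ Set.Icc (0:ℝ) T,
      HasDerivAt lθ (v * (a * Real.sin (θ t) - b * Real.cos (θ t))) t) :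
    (∀ t1 ∈ Set.Icc (0:ℝ) T, ∀ t2 ∈ Set.Icc (0:ℝ) T,
      lθ t1 + b * x t1 - a * y t1 = lθ t2 + b * x t2 - a * y t2) ∧
    (∀ t1 ∈ Set.Icc (0:ℝ) T, ∀ t2 ∈ Set.Icc (0:ℝ) T,
      lθ t1 = 0 → lθ t2 = 0 →
        b * x t1 - a * y t1 = b * x t2 - a * y t2) := by
  set g : ℝ → ℝ := fun t => lθ t + b * x t - a * y t with hg
  have hgd : ∀ t ∈ Set.Icc (0:ℝ) T, HasDerivAt g 0 t := by
    intro t ht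
    have := (((hlθ t ht).add ((hx t ht).const_mul b)).sub ((hy t ht).const_mul a))
    refine (this : HasDerivAt g _ t).congr_deriv ?_
    ring
  have hconst : ∀ t ∈ Set.Icc (0:ℝ) T, g t = g 0 := by
    apply constant_of_has_deriv_right_zero
    · exact fun t ht => (hgd t ht).continuousAt.continuousWithinAt
    · intro t ht
      exact (hgd t (Set.mem_Icc_of_Ico ht)).hasDerivWithinAt
  have key : ∀ t1 ∈ Set.Icc (0:ℝ) T, ∀ t2 ∈ Set.Icc (0:ℝ) T,
      lθ t1 + b * x t1 - a * y t1 = lθ t2 + b * x t2 - a * y t2 := by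
    intro t1 h1 t2 h2
    have := (hconst t1 h1).trans (hconst t2 h2).symm
    simpa [hg] using this
  refine ⟨key, fun t1 h1 t2 h2 hz1 hz2 => ?_⟩
  have := key t1 h1 t2 h2
  rw [hz1, hz2] at this
  linarith
end

section
/- Consider two circular arcs of equal radius ρ joined at an inflexion point P, traversed with opposite turning directions (an LR or RL path), such that the start point A, the inflexion point P, and the end point B are collinear. Then the arc length of the first segment equals the arc length of the second segment, and the heading of the path at A equals the heading at B. -/
/-- Trig identity: the cross product of the two chord vectors of an LR path. -/
lemma dubins_cross_trig_id (a u v : ℝ) :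
    (Real.sin (a+(u+u)) - Real.sin a) *
        (Real.cos (a+(u+u)-(v+v)) - Real.cos (a+(u+u)))
      - (Real.cos a - Real.cos (a+(u+u))) *
        (Real.sin (a+(u+u)) - Real.sin (a+(u+u)-(v+v)))
    = 4 * Real.sin u * Real.sin v * Real.sin (u - v) := by
  simp only [Real.sin_add, Real.cos_add, Real.sin_sub, Real.cos_sub]
  linear_combination
    (-2*Real.cos u^2*Real.sin v*Real.cos v + 2*Real.cos u^4*Real.sin v*Real.cos v
      - 2*Real.sin u*Real.cos u + 2*Real.sin u*Real.cos u*Real.cos v^2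
      - 2*Real.sin u*Real.cos u*Real.sin v^2 + 2*Real.sin u^2*Real.sin v*Real.cos v
      + 4*Real.sin u^2*Real.cos u^2*Real.sin v*Real.cos v
      + 2*Real.sin u^4*Real.sin v*Real.cos v) * (Real.sin_sq_add_cos_sq a)
    + (2*Real.cos u^2*Real.sin v*Real.cos v + 2*Real.sin u^2*Real.sin v*Real.cos v) *
        (Real.sin_sq_add_cos_sq u)
    + (2*Real.sin u*Real.cos u) * (Real.sin_sq_add_cos_sq v)

/-- Two functions with the same derivative on a closed interval have the same
increments. -/
lemma dubins_diff_eq {f g d : ℝ → ℝ} {a b : ℝ} (hab : a ≤ b)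
    (hf : ∀ s ∈ Set.Icc a b, HasDerivAt f (d s) s)
    (hg : ∀ s ∈ Set.Icc a b, HasDerivAt g (d s) s) :
    f b - g b = f a - g a := by
  have key := constant_of_has_deriv_right_zero (f := fun s => f s - g s) (a := a) (b := b)
    (fun s hs => (((hf s hs).sub (hg s hs)).continuousAt).continuousWithinAt)
    (fun s hs => by
      have h := (((hf s (Set.mem_Icc_of_Ico hs)).sub
        (hg s (Set.mem_Icc_of_Ico hs))).hasDerivWithinAt (s := Set.Ici s))
      simp only [sub_self] at h; exact h)
  simpa using key b (Set.right_mem_Icc.2 hab)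

/-- Two circular arcs of equal radius ρ (< one full revolution each), joined
C¹ at an inflexion point P with opposite turning directions (L then R): if the
start A, the junction P and the end B are collinear, then the two arc lengths
are equal and the heading at A equals the heading at B. -/
theorem dubins_LR_collinear_implies_equal_arcs
    (ρ s1 s2 φ0 : ℝ) (hρ : 0 < ρ)
    (hs1 : 0 < s1) (hs2 : 0 < s2)
    (hs1' : s1 < 2 * Real.pi * ρ) (hs2' : s2 < 2 * Real.pi * ρ)
    (φ x y : ℝ → ℝ)
    -- first arc: left turn at rate 1/ρ
    (hφ1 : ∀ s ∈ Set.Icc 0 s1, φ s = φ0 + s / ρ)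
    -- second arc: right turn at rate 1/ρ (C¹ at the junction s = s1)
    (hφ2 : ∀ s ∈ Set.Icc s1 (s1 + s2), φ s = φ0 + s1 / ρ - (s - s1) / ρ)
    -- unit-speed planar curve with heading φ
    (hx : ∀ s ∈ Set.Icc 0 (s1 + s2), HasDerivAt x (Real.cos (φ s)) s)
    (hy : ∀ s ∈ Set.Icc 0 (s1 + s2), HasDerivAt y (Real.sin (φ s)) s)
    -- A, P, B collinear
    (hcol : Collinear ℝ ({(x 0, y 0), (x s1, y s1), (x (s1 + s2), y (s1 + s2))}
      : Set (ℝ × ℝ))) :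
    s1 = s2 ∧ φ (s1 + s2) = φ 0 := by
  have hρ' : ρ ≠ 0 := ne_of_gt hρ
  -- subinterval inclusions
  have hsub1 : Set.Icc (0:ℝ) s1 ⊆ Set.Icc 0 (s1 + s2) :=
    Set.Icc_subset_Icc le_rfl (by linarith)
  have hsub2 : Set.Icc s1 (s1 + s2) ⊆ Set.Icc 0 (s1 + s2) :=
    Set.Icc_subset_Icc (by linarith) le_rfl
  -- derivative of the inner angle functions
  have hang1 : ∀ s : ℝ, HasDerivAt (fun t => φ0 + t / ρ) (1 / ρ) s := by
    intro s
    simpa using ((hasDerivAt_id s).div_const ρ).const_add φ0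
  have hang2 : ∀ s : ℝ,
      HasDerivAt (fun t => φ0 + s1 / ρ - (t - s1) / ρ) (-(1 / ρ)) s := by
    intro s
    have h : HasDerivAt (fun t => (t - s1) / ρ) (1 / ρ) s := by
      simpa using ((hasDerivAt_id s).sub_const s1).div_const ρ
    simpa using h.const_sub (φ0 + s1 / ρ)
  -- antiderivatives on the first arc
  have h1x : x s1 - ρ * Real.sin (φ0 + s1 / ρ)
      = x 0 - ρ * Real.sin (φ0 + 0 / ρ) := by
    refine dubins_diff_eq (g := fun t => ρ * Real.sin (φ0 + t / ρ))
      (d := fun s => Real.cos (φ s)) hs1.le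
      (fun s hs => hx s (hsub1 hs)) (fun s hs => ?_)
    simp only [hφ1 s hs]
    have h := ((hang1 s).sin).const_mul ρ
    refine h.congr_deriv ?_
    field_simp
  have h1y : y s1 - (-(ρ * Real.cos (φ0 + s1 / ρ)))
      = y 0 - (-(ρ * Real.cos (φ0 + 0 / ρ))) := by
    refine dubins_diff_eq (g := fun t => -(ρ * Real.cos (φ0 + t / ρ)))
      (d := fun s => Real.sin (φ s)) hs1.le
      (fun s hs => hy s (hsub1 hs)) (fun s hs => ?_)
    simp only [hφ1 s hs]
    have h := (((hang1 s).cos).const_mul ρ).neg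
    refine h.congr_deriv ?_
    field_simp
  -- antiderivatives on the second arc
  have h2x : x (s1 + s2) - (-(ρ * Real.sin (φ0 + s1 / ρ - (s1 + s2 - s1) / ρ)))
      = x s1 - (-(ρ * Real.sin (φ0 + s1 / ρ - (s1 - s1) / ρ))) := by
    refine dubins_diff_eq (g := fun t => -(ρ * Real.sin (φ0 + s1 / ρ - (t - s1) / ρ)))
      (d := fun s => Real.cos (φ s)) (by linarith)
      (fun s hs => hx s (hsub2 hs)) (fun s hs => ?_)
    simp only [hφ2 s hs]
    have h := (((hang2 s).sin).const_mul ρ).neg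
    refine h.congr_deriv ?_
    field_simp
  have h2y : y (s1 + s2) - ρ * Real.cos (φ0 + s1 / ρ - (s1 + s2 - s1) / ρ)
      = y s1 - ρ * Real.cos (φ0 + s1 / ρ - (s1 - s1) / ρ) := by
    refine dubins_diff_eq (g := fun t => ρ * Real.cos (φ0 + s1 / ρ - (t - s1) / ρ))
      (d := fun s => Real.sin (φ s)) (by linarith)
      (fun s hs => hy s (hsub2 hs)) (fun s hs => ?_)
    simp only [hφ2 s hs]
    have h := ((hang2 s).cos).const_mul ρ
    refine h.congr_deriv ?_
    field_simp
  simp only [add_sub_cancel_left, sub_self, zero_div, add_zero, sub_zero] at h1x h1y h2x h2y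
  -- chord vectors
  have hxA : x s1 - x 0 = ρ * (Real.sin (φ0 + s1 / ρ) - Real.sin φ0) := by
    rw [mul_sub]; linarith
  have hyA : y s1 - y 0 = ρ * (Real.cos φ0 - Real.cos (φ0 + s1 / ρ)) := by
    rw [mul_sub]; linarith
  have hxB : x (s1 + s2) - x s1
      = ρ * (Real.sin (φ0 + s1 / ρ) - Real.sin (φ0 + s1 / ρ - s2 / ρ)) := by
    rw [mul_sub]; linarith
  have hyB : y (s1 + s2) - y s1
      = ρ * (Real.cos (φ0 + s1 / ρ - s2 / ρ) - Real.cos (φ0 + s1 / ρ)) := by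
    rw [mul_sub]; linarith
  -- collinearity gives vanishing cross product
  have hA : ((x 0, y 0) : ℝ × ℝ) ∈
      ({(x 0, y 0), (x s1, y s1), (x (s1 + s2), y (s1 + s2))} : Set (ℝ × ℝ)) :=
    Set.mem_insert _ _
  obtain ⟨v, hv⟩ := (collinear_iff_of_mem hA).1 hcol
  obtain ⟨r1, hP⟩ := hv (x s1, y s1) (by simp)
  obtain ⟨r2, hB⟩ := hv (x (s1 + s2), y (s1 + s2)) (by simp)
  have hPx : x s1 = r1 * v.1 + x 0 := by
    have := congrArg Prod.fst hP; simpa [Prod.smul_def, smul_eq_mul] using this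
  have hPy : y s1 = r1 * v.2 + y 0 := by
    have := congrArg Prod.snd hP; simpa [Prod.smul_def, smul_eq_mul] using this
  have hBx : x (s1 + s2) = r2 * v.1 + x 0 := by
    have := congrArg Prod.fst hB; simpa [Prod.smul_def, smul_eq_mul] using this
  have hBy : y (s1 + s2) = r2 * v.2 + y 0 := by
    have := congrArg Prod.snd hB; simpa [Prod.smul_def, smul_eq_mul] using this
  have cross : (x s1 - x 0) * (y (s1 + s2) - y s1)
      - (y s1 - y 0) * (x (s1 + s2) - x s1) = 0 := by
    rw [hPx, hPy, hBx, hBy]; ring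
  rw [hxA, hyA, hxB, hyB] at cross
  -- reduce to the trig equation
  have key : (Real.sin (φ0 + s1 / ρ) - Real.sin φ0) *
        (Real.cos (φ0 + s1 / ρ - s2 / ρ) - Real.cos (φ0 + s1 / ρ))
      - (Real.cos φ0 - Real.cos (φ0 + s1 / ρ)) *
        (Real.sin (φ0 + s1 / ρ) - Real.sin (φ0 + s1 / ρ - s2 / ρ)) = 0 := by
    have hρ2 : (ρ:ℝ) ^ 2 ≠ 0 := pow_ne_zero 2 hρ'
    have h : ρ ^ 2 * ((Real.sin (φ0 + s1 / ρ) - Real.sin φ0) *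
        (Real.cos (φ0 + s1 / ρ - s2 / ρ) - Real.cos (φ0 + s1 / ρ))
      - (Real.cos φ0 - Real.cos (φ0 + s1 / ρ)) *
        (Real.sin (φ0 + s1 / ρ) - Real.sin (φ0 + s1 / ρ - s2 / ρ))) = 0 := by
      linear_combination cross
    exact (mul_eq_zero.1 h).resolve_left hρ2
  -- half angles
  set u := s1 / (2 * ρ) with hu
  set w := s2 / (2 * ρ) with hw
  have e1 : s1 / ρ = u + u := by rw [hu]; field_simp; ring
  have e2 : s2 / ρ = w + w := by rw [hw]; field_simp; ring
  rw [e1, e2, dubins_cross_trig_id φ0 u w] at key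
  have hupos : 0 < u := by positivity
  have hwpos : 0 < w := by positivity
  have hupi : u < Real.pi := by
    rw [hu, div_lt_iff₀ (by positivity)]; linarith
  have hwpi : w < Real.pi := by
    rw [hw, div_lt_iff₀ (by positivity)]; linarith
  have hsu : 0 < Real.sin u := Real.sin_pos_of_pos_of_lt_pi hupos hupi
  have hsw : 0 < Real.sin w := Real.sin_pos_of_pos_of_lt_pi hwpos hwpi
  have hsuw : Real.sin (u - w) = 0 := by
    rcases mul_eq_zero.1 key with h | h
    · rcases mul_eq_zero.1 h with h' | h'
      · rcases mul_eq_zero.1 h' with h'' | h''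
        · norm_num at h''
        · exact absurd h'' (ne_of_gt hsu)
      · exact absurd h' (ne_of_gt hsw)
    · exact h
  have huw : u = w := by
    have h := (Real.sin_eq_zero_iff_of_lt_of_lt (by linarith) (by linarith)).1 hsuw
    linarith
  have hs12 : s1 = s2 := by
    have : s1 / (2 * ρ) = s2 / (2 * ρ) := huw
    field_simp at this
    linarith
  refine ⟨hs12, ?_⟩
  have hφend : φ (s1 + s2) = φ0 + s1 / ρ - (s1 + s2 - s1) / ρ :=
    hφ2 (s1 + s2) (Set.mem_Icc.2 ⟨by linarith, le_rfl⟩)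
  have hφ0' : φ 0 = φ0 := by
    have := hφ1 0 (Set.mem_Icc.2 ⟨le_rfl, hs1.le⟩)
    simpa using this
  rw [hφend, hφ0', hs12]
  ring
end
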